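/- Let N ≥ 2 and let z¹, …, zᴺ ∈ ℝ² be pairwise distinct. Then ∑_{i=1}^N ∑_{j≠i} ∑_{k≠i} ⟨(z^i − z^j)/|z^i − z^j|², (z^i − z^k)/|z^i − z^k|²⟩ = (1/3) ∑_{i=1}^N ∑_{j≠i} ∑_{k≠i,j} 2(|z^i−z^j|²|z^i−z^k|² − ⟨z^i−z^j, z^i−z^k⟩²)/(|z^i−z^j|²|z^i−z^k|²|z^j−z^k|²) + ∑_{i=1}^N ∑_{j≠i} 1/|z^i − z^j|². -/
import Mathlib


open Finset RealInnerProductSpace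

private lemma coulomb_alg (x y w d : ℝ) (hx : x ≠ 0) (hy : y ≠ 0) (hw : w ≠ 0)
    (hwxy : w = x - 2 * d + y) :
    x⁻¹ * (y⁻¹ * d) + w⁻¹ * (x⁻¹ * (x - d)) + y⁻¹ * (w⁻¹ * (y - d))
      = 2 * (x * y - d ^ 2) / (x * y * w) := by
  field_simp
  rw [hwxy]
  ring

private lemma coulomb_key {E : Type*} [NormedAddCommGroup E] [InnerProductSpace ℝ E]
    (p q r : E) (hpq : p ≠ q) (hpr : p ≠ r) (hqr : q ≠ r) :
    ⟪(‖p - q‖ ^ 2)⁻¹ • (p - q), (‖p - r‖ ^ 2)⁻¹ • (p - r)⟫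
      + ⟪(‖q - r‖ ^ 2)⁻¹ • (q - r), (‖q - p‖ ^ 2)⁻¹ • (q - p)⟫
      + ⟪(‖r - p‖ ^ 2)⁻¹ • (r - p), (‖r - q‖ ^ 2)⁻¹ • (r - q)⟫
    = 2 * (‖p - q‖ ^ 2 * ‖p - r‖ ^ 2 - ⟪p - q, p - r⟫ ^ 2)
        / (‖p - q‖ ^ 2 * ‖p - r‖ ^ 2 * ‖q - r‖ ^ 2) := by
  set a := p - q with ha
  set b := p - r with hb
  have hqr' : q - r = b - a := by rw [ha, hb]; abel
  have hqp : q - p = -a := by rw [ha]; abel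
  have hrp : r - p = -b := by rw [hb]; abel
  have hrq : r - q = -(b - a) := by rw [ha, hb]; abel
  have ha0 : a ≠ 0 := sub_ne_zero.mpr hpq
  have hb0 : b ≠ 0 := sub_ne_zero.mpr hpr
  have hba0 : b - a ≠ 0 :=
    sub_ne_zero.mpr fun h => hqr (sub_right_injective h).symm
  have hx : ‖a‖ ^ 2 ≠ 0 := pow_ne_zero 2 (norm_ne_zero_iff.mpr ha0)
  have hy : ‖b‖ ^ 2 ≠ 0 := pow_ne_zero 2 (norm_ne_zero_iff.mpr hb0)
  have hw : ‖b - a‖ ^ 2 ≠ 0 := pow_ne_zero 2 (norm_ne_zero_iff.mpr hba0)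
  have hwxy : ‖b - a‖ ^ 2 = ‖a‖ ^ 2 - 2 * ⟪a, b⟫ + ‖b‖ ^ 2 := by
    rw [@norm_sub_sq_real, real_inner_comm]; ring
  have h1 : ⟪b - a, -a⟫ = ‖a‖ ^ 2 - ⟪a, b⟫ := by
    simp [inner_sub_left, inner_neg_right, real_inner_self_eq_norm_sq,
      real_inner_comm b a]
  have h2 : ⟪-b, -(b - a)⟫ = ‖b‖ ^ 2 - ⟪a, b⟫ := by
    simp [inner_sub_right, real_inner_self_eq_norm_sq, real_inner_comm b a]
    ring
  rw [hqr', hqp, hrp, hrq]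
  simp only [norm_neg]
  rw [real_inner_smul_left, real_inner_smul_right, real_inner_smul_left,
    real_inner_smul_right, real_inner_smul_left, real_inner_smul_right, h1, h2]
  exact coulomb_alg _ _ _ _ hx hy hw hwxy

private def distTriples (N : ℕ) : Finset (Fin N × Fin N × Fin N) :=
  univ.filter fun p => p.2.1 ≠ p.1 ∧ p.2.2 ≠ p.1 ∧ p.2.2 ≠ p.2.1

private lemma triple_filter {N : ℕ} (f : Fin N → Fin N → Fin N → ℝ) :
    (∑ i, ∑ j ∈ univ.erase i, ∑ k ∈ (univ.erase i).erase j, f i j k)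
      = ∑ p ∈ distTriples N, f p.1 p.2.1 p.2.2 := by
  rw [distTriples, Finset.sum_filter]
  simp only [Fintype.sum_prod_type]
  refine Finset.sum_congr rfl fun i _ => ?_
  simp only [← Finset.filter_ne', Finset.sum_filter]
  refine Finset.sum_congr rfl fun j _ => ?_
  by_cases h : j ≠ i
  · rw [if_pos h]
    refine Finset.sum_congr rfl fun k _ => ?_
    split_ifs <;> tauto
  · simp [h]

private lemma filter_cyc {N : ℕ} (f : Fin N → Fin N → Fin N → ℝ) :
    ∑ p ∈ distTriples N, f p.1 p.2.1 p.2.2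
      = ∑ p ∈ distTriples N, f p.2.1 p.2.2 p.1 := by
  refine Finset.sum_nbij' (fun p => (p.2.2, p.1, p.2.1)) (fun p => (p.2.1, p.2.2, p.1))
    ?_ ?_ ?_ ?_ ?_
  · intro a ha
    simp only [distTriples, mem_filter, mem_univ, true_and] at ha ⊢
    tauto
  · intro a ha
    simp only [distTriples, mem_filter, mem_univ, true_and] at ha ⊢
    tauto
  · intro a _; rfl
  · intro a _; rfl
  · intro a _; rfl

/-- The triple-sum symmetrization identity at the heart of Lemma `2dpotentialgame`
(the potential structure of the open loop Coulomb game). -/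
theorem coulomb_triple_sum_identity (N : ℕ) (hN : 2 ≤ N)
    (z : Fin N → EuclideanSpace ℝ (Fin 2)) (hz : Function.Injective z) :
    ∑ i, ∑ j ∈ univ.erase i, ∑ k ∈ univ.erase i,
        ⟪(‖z i - z j‖ ^ 2)⁻¹ • (z i - z j), (‖z i - z k‖ ^ 2)⁻¹ • (z i - z k)⟫
    = (1 / 3) * ∑ i, ∑ j ∈ univ.erase i, ∑ k ∈ (univ.erase i).erase j,
          2 * (‖z i - z j‖ ^ 2 * ‖z i - z k‖ ^ 2 - ⟪z i - z j, z i - z k⟫ ^ 2)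
            / (‖z i - z j‖ ^ 2 * ‖z i - z k‖ ^ 2 * ‖z j - z k‖ ^ 2)
      + ∑ i, ∑ j ∈ univ.erase i, (‖z i - z j‖ ^ 2)⁻¹ := by
  have hzne : ∀ i j : Fin N, i ≠ j → z i ≠ z j := fun i j h e => h (hz e)
  set F : Fin N → Fin N → Fin N → ℝ := fun i j k =>
    ⟪(‖z i - z j‖ ^ 2)⁻¹ • (z i - z j), (‖z i - z k‖ ^ 2)⁻¹ • (z i - z k)⟫ with hF
  set G : Fin N → Fin N → Fin N → ℝ := fun i j k =>
    2 * (‖z i - z j‖ ^ 2 * ‖z i - z k‖ ^ 2 - ⟪z i - z j, z i - z k⟫ ^ 2)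
      / (‖z i - z j‖ ^ 2 * ‖z i - z k‖ ^ 2 * ‖z j - z k‖ ^ 2) with hG
  have diag : ∀ i j : Fin N, i ≠ j → F i j j = (‖z i - z j‖ ^ 2)⁻¹ := by
    intro i j h
    have h0 : z i - z j ≠ 0 := sub_ne_zero.mpr (hzne i j h)
    have hx : ‖z i - z j‖ ^ 2 ≠ 0 := pow_ne_zero 2 (norm_ne_zero_iff.mpr h0)
    rw [hF]
    simp only
    rw [real_inner_smul_left, real_inner_smul_right, real_inner_self_eq_norm_sq]
    field_simp
  have hsplit : ∀ i : Fin N, ∀ j ∈ univ.erase i,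
      ∑ k ∈ univ.erase i, F i j k
        = (∑ k ∈ (univ.erase i).erase j, F i j k) + (‖z i - z j‖ ^ 2)⁻¹ := by
    intro i j hj
    rw [← Finset.sum_erase_add _ _ hj, diag i j (Finset.mem_erase.mp hj).1.symm]
  have step1 :
      ∑ i, ∑ j ∈ univ.erase i, ∑ k ∈ univ.erase i, F i j k
        = (∑ i, ∑ j ∈ univ.erase i, ∑ k ∈ (univ.erase i).erase j, F i j k)
          + ∑ i, ∑ j ∈ univ.erase i, (‖z i - z j‖ ^ 2)⁻¹ := by
    rw [← Finset.sum_add_distrib]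
    refine Finset.sum_congr rfl fun i _ => ?_
    rw [← Finset.sum_add_distrib]
    exact Finset.sum_congr rfl (hsplit i)
  have hA := triple_filter F
  have hB := triple_filter G
  have hc1 := filter_cyc F
  have hc2 := filter_cyc (fun i j k => F j k i)
  have hkey : ∑ p ∈ distTriples N, (F p.1 p.2.1 p.2.2 + F p.2.1 p.2.2 p.1
        + F p.2.2 p.1 p.2.1)
      = ∑ p ∈ distTriples N, G p.1 p.2.1 p.2.2 := by
    refine Finset.sum_congr rfl fun p hp => ?_
    simp only [distTriples, mem_filter, mem_univ, true_and] at hp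
    obtain ⟨h1, h2, h3⟩ := hp
    exact coulomb_key (z p.1) (z p.2.1) (z p.2.2)
      (hzne _ _ (Ne.symm h1)) (hzne _ _ (Ne.symm h2)) (hzne _ _ (Ne.symm h3))
  have h3A : (∑ i, ∑ j ∈ univ.erase i, ∑ k ∈ (univ.erase i).erase j, F i j k)
      = (1 / 3) * ∑ i, ∑ j ∈ univ.erase i, ∑ k ∈ (univ.erase i).erase j, G i j k := by
    rw [hA, hB]
    have hexp : ∑ p ∈ distTriples N, (F p.1 p.2.1 p.2.2 + F p.2.1 p.2.2 p.1
          + F p.2.2 p.1 p.2.1)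
        = ∑ p ∈ distTriples N, F p.1 p.2.1 p.2.2
          + ∑ p ∈ distTriples N, F p.2.1 p.2.2 p.1
          + ∑ p ∈ distTriples N, F p.2.2 p.1 p.2.1 := by
      rw [Finset.sum_add_distrib, Finset.sum_add_distrib]
    linarith [hkey, hc1, hc2, hexp]
  rw [step1, h3A]
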